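/- Let 0 < r_min ≤ r_max, set R = r_max/r_min, a = √((r_min² + r_max²)/2), and c_n = (2n+1)!!/(2n)!! = (2n+1)!/(4ⁿ·(n!)²). For d ∈ ℕ define the polynomial approximation f_d(s) = a^{−3} Σ_{n=0}^{d} c_n (1 − s/a²)ⁿ. Then for every r with r_min ≤ r ≤ r_max: |f_d(r²) − r^{−3}| ≤ 2^{3/2} · r_max^{−3} · c_{d+1} · ((R² + 1)/2)^{d + 5/2} · exp(−2(d+1)/(R² + 1)). -/

import Mathlib

/-- The binomial coefficients `cₙ = (2n+1)!!/(2n)!! = (2n+1)!/(4ⁿ (n!)²)` of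
the power series of `(1-x)^{-3/2}`. -/
noncomputable def binCoef (n : ℕ) : ℝ :=
  (Nat.factorial (2 * n + 1) : ℝ) / (4 ^ n * (Nat.factorial n : ℝ) ^ 2)

lemma binCoef_pos (n : ℕ) : 0 < binCoef n := by
  have h1 : (0:ℝ) < (Nat.factorial (2*n+1) : ℝ) := by exact_mod_cast Nat.factorial_pos _
  have h2 : (0:ℝ) < (Nat.factorial n : ℝ) := by exact_mod_cast Nat.factorial_pos _
  exact div_pos h1 (by positivity)

lemma binCoef_succ (n : ℕ) :
    binCoef (n+1) * (Nat.factorial (n+1) : ℝ) =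
    binCoef n * (Nat.factorial n : ℝ) * ((n : ℝ) + 3/2) := by
  have h2 : (0:ℝ) < (Nat.factorial n : ℝ) := by exact_mod_cast Nat.factorial_pos _
  unfold binCoef
  have e1 : 2*(n+1)+1 = (2*n+1) + 1 + 1 := by ring
  rw [e1, Nat.factorial_succ (2*n+1+1), Nat.factorial_succ (2*n+1), Nat.factorial_succ n]
  push_cast
  field_simp
  ring

lemma taylor_est (e y q : ℝ) (he : e = 1 ∨ e = -1) (hy : 0 < y) (hyq : y ≤ q) (hq : q < 1)
    (d : ℕ) :
    |(∑ n ∈ Finset.range (d + 1), binCoef n * (e * y) ^ n) - (1 - e * y) ^ (-(3:ℝ)/2)| ≤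
      binCoef (d + 1) * q ^ (d + 1) * (1 - q) ^ (-(3:ℝ)/2 - ((d:ℝ) + 1)) := by
  have hq0 : 0 < q := hy.trans_le hyq
  have h1q : 0 < 1 - q := by linarith
  have hbd : ∀ t ∈ Set.Icc (0:ℝ) y, e * t ≤ q := by
    rcases he with rfl | rfl <;> intro t ht <;> rcases ht with ⟨ht1, ht2⟩ <;> nlinarith
  have hpos : ∀ t ∈ Set.Icc (0:ℝ) y, 0 < 1 - e * t := fun t ht => by
    have := hbd t ht; linarith
  set g : ℝ → ℝ := fun t => (1 - e * t) ^ (-(3:ℝ)/2) with hgdef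
  have hasD : ∀ (n : ℕ) (t : ℝ), (1 - e * t) ≠ 0 →
      HasDerivAt (fun s => e ^ n * binCoef n * (Nat.factorial n : ℝ) * (1 - e * s) ^ (-(3:ℝ)/2 - (n:ℝ)))
        (e ^ n * binCoef n * (Nat.factorial n : ℝ) *
          (-e * (-(3:ℝ)/2 - (n:ℝ)) * (1 - e * t) ^ (-(3:ℝ)/2 - (n:ℝ) - 1))) t := by
    intro n t hne
    have h1 : HasDerivAt (fun s : ℝ => 1 - e * s) (-e) t := by
      simpa using ((hasDerivAt_id t).const_mul e).const_sub 1
    exact (h1.rpow_const (Or.inl hne)).const_mul _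
  have key : ∀ (n : ℕ), ∀ t ∈ Set.Icc (0:ℝ) y,
      iteratedDerivWithin n g (Set.Icc 0 y) t
        = e ^ n * binCoef n * (Nat.factorial n : ℝ) * (1 - e * t) ^ (-(3:ℝ)/2 - (n:ℝ)) := by
    intro n
    induction n with
    | zero =>
      intro t ht
      simp only [iteratedDerivWithin_zero, hgdef, pow_zero, Nat.factorial_zero, Nat.cast_zero,
        Nat.cast_one, one_mul, mul_one]
      norm_num [binCoef, Nat.factorial]
    | succ n ih =>
      intro t ht
      rw [iteratedDerivWithin_succ]
      rw [derivWithin_congr (fun s hs => ih s hs) (ih t ht)]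
      rw [(hasD n t (hpos t ht).ne').hasDerivWithinAt.derivWithin ((uniqueDiffOn_Icc hy) t ht)]
      have hE : -(3:ℝ)/2 - ((n+1 : ℕ):ℝ) = -(3:ℝ)/2 - (n:ℝ) - 1 := by push_cast; ring
      rw [hE]
      linear_combination (-(e^(n+1) * (1 - e * t) ^ (-(3:ℝ)/2 - (n:ℝ) - 1))) * binCoef_succ n
  have hcd : ContDiffOn ℝ d g (Set.Icc 0 y) := by
    intro t ht
    exact (((contDiff_const.sub ((contDiff_const (c := e)).mul contDiff_id)).contDiffAt).rpow_const_of_ne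
      (hpos t ht).ne').contDiffWithinAt
  have hdiff : DifferentiableOn ℝ (iteratedDerivWithin d g (Set.Icc 0 y)) (Set.Ioo 0 y) := by
    intro t ht
    have htI : t ∈ Set.Icc (0:ℝ) y := Set.Ioo_subset_Icc_self ht
    exact (((hasD d t (hpos t htI).ne').differentiableAt).differentiableWithinAt).congr
      (fun s hs => key d s (Set.Ioo_subset_Icc_self hs)) (key d t htI)
  obtain ⟨x', hx', heq⟩ := taylor_mean_remainder_lagrange (x₀ := 0) (x := y) hy.ne
    (by rwa [Set.uIcc_of_le hy.le]) (by rwa [Set.uIcc_of_le hy.le, Set.uIoo_of_le hy.le])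
  rw [Set.uIoo_of_le hy.le] at hx'
  rw [Set.uIcc_of_le hy.le] at heq
  have htay : taylorWithinEval g d (Set.Icc 0 y) 0 y
      = ∑ n ∈ Finset.range (d+1), binCoef n * (e*y)^n := by
    rw [taylor_within_apply]
    refine Finset.sum_congr rfl fun k hk => ?_
    rw [key k 0 (Set.left_mem_Icc.mpr hy.le)]
    have hfk : ((Nat.factorial k : ℝ)) ≠ 0 := by
      exact_mod_cast (Nat.factorial_pos k).ne'
    simp only [mul_zero, sub_zero, Real.one_rpow, smul_eq_mul, mul_one]
    field_simp [mul_pow]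
    ring
  rw [htay, key (d+1) x' (Set.Ioo_subset_Icc_self hx')] at heq
  have hx'I : x' ∈ Set.Icc (0:ℝ) y := Set.Ioo_subset_Icc_self hx'
  have hEx : -(3:ℝ)/2 - ((d+1 : ℕ):ℝ) = -(3:ℝ)/2 - ((d:ℝ) + 1) := by push_cast; ring
  rw [hEx] at heq
  have hP'pos : 0 < (1 - e*x') ^ (-(3:ℝ)/2 - ((d:ℝ)+1)) :=
    Real.rpow_pos_of_pos (hpos x' hx'I) _
  have habse : |e| = 1 := by rcases he with rfl | rfl <;> norm_num
  have hfd : (0:ℝ) < (Nat.factorial (d+1) : ℝ) := by exact_mod_cast Nat.factorial_pos _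
  rw [abs_sub_comm, heq]
  have habs : |e ^ (d+1) * binCoef (d+1) * ((Nat.factorial (d+1)) : ℝ) *
        (1 - e*x') ^ (-(3:ℝ)/2 - ((d:ℝ)+1)) * (y-0)^(d+1) / ((Nat.factorial (d+1)) : ℝ)|
      = binCoef (d+1) * (1 - e*x') ^ (-(3:ℝ)/2 - ((d:ℝ)+1)) * y^(d+1) := by
    simp only [abs_div, abs_mul, abs_pow, habse, one_pow, one_mul, sub_zero]
    rw [abs_of_pos (binCoef_pos _), Nat.abs_cast, abs_of_pos hP'pos, abs_of_nonneg hy.le]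
    field_simp
  rw [habs]
  have h1 : (1 - e*x') ^ (-(3:ℝ)/2 - ((d:ℝ)+1)) ≤ (1 - q) ^ (-(3:ℝ)/2 - ((d:ℝ)+1)) := by
    apply Real.rpow_le_rpow_of_nonpos h1q
    · have := hbd x' hx'I; linarith
    · have : (0:ℝ) ≤ (d:ℝ) := Nat.cast_nonneg d
      linarith
  have h2 : y^(d+1) ≤ q^(d+1) := pow_le_pow_left₀ hy.le hyq _
  calc binCoef (d+1) * (1 - e*x') ^ (-(3:ℝ)/2 - ((d:ℝ)+1)) * y^(d+1)
      ≤ binCoef (d+1) * (1 - q) ^ (-(3:ℝ)/2 - ((d:ℝ)+1)) * q^(d+1) := by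
        apply mul_le_mul (mul_le_mul le_rfl h1 hP'pos.le (binCoef_pos _).le) h2
          (pow_nonneg hy.le _)
        exact mul_nonneg (binCoef_pos _).le (Real.rpow_nonneg h1q.le _)
    _ = binCoef (d + 1) * q ^ (d + 1) * (1 - q) ^ (-(3:ℝ)/2 - ((d:ℝ) + 1)) := by ring

lemma rpow_neg_three_half {u : ℝ} (hu : 0 < u) : u ^ (-(3:ℝ)/2) = ((Real.sqrt u)⁻¹) ^ 3 := by
  rw [Real.sqrt_eq_rpow, ← Real.rpow_neg hu.le, ← Real.rpow_natCast (u ^ (-(1/2):ℝ)) 3,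
      ← Real.rpow_mul hu.le]
  norm_num

set_option maxHeartbeats 1000000 in
/-- **Uniform polynomial approximation of the inverse-cube law.**
For `0 < r_min ≤ r_max`, `R = r_max/r_min`, `a = √((r_min² + r_max²)/2)` and the
degree-`d` truncation `f_d(s) = a⁻³ ∑_{n=0}^d cₙ (1 - s/a²)ⁿ`, every
`r ∈ [r_min, r_max]` satisfies
`|f_d(r²) - r⁻³| ≤ 2^{3/2} r_max⁻³ c_{d+1} ((R²+1)/2)^{d+5/2} exp(-2(d+1)/(R²+1))`. -/
theorem stmt13 (rmin rmax : ℝ) (h0 : 0 < rmin) (hle : rmin ≤ rmax)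
    (d : ℕ) (r : ℝ) (hr1 : rmin ≤ r) (hr2 : r ≤ rmax) :
    |(Real.sqrt ((rmin ^ 2 + rmax ^ 2) / 2))⁻¹ ^ 3 *
        (∑ n ∈ Finset.range (d + 1),
          binCoef n * (1 - r ^ 2 / ((rmin ^ 2 + rmax ^ 2) / 2)) ^ n) -
        (r ^ 3)⁻¹| ≤
      2 ^ ((3 : ℝ) / 2) * (rmax ^ 3)⁻¹ * binCoef (d + 1) *
        (((rmax / rmin) ^ 2 + 1) / 2) ^ ((d : ℝ) + 5 / 2) *
        Real.exp (-2 * (d + 1) / ((rmax / rmin) ^ 2 + 1)) := by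
  have hrpos : 0 < r := lt_of_lt_of_le h0 hr1
  have hrmaxpos : 0 < rmax := lt_of_lt_of_le h0 hle
  set A2 : ℝ := (rmin ^ 2 + rmax ^ 2) / 2 with hA2
  have hA2pos : 0 < A2 := by rw [hA2]; positivity
  set x : ℝ := 1 - r ^ 2 / A2 with hxdef
  set q : ℝ := 1 - rmin ^ 2 / A2 with hqdef
  have hrr : rmin ^ 2 ≤ r ^ 2 := by nlinarith
  have hrR : r ^ 2 ≤ rmax ^ 2 := by nlinarith
  have h1qeq : (1:ℝ) - q = rmin ^ 2 / A2 := by rw [hqdef]; ring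
  have h1q : 0 < 1 - q := by rw [h1qeq]; positivity
  have hq0 : 0 ≤ q := by
    have h1 : rmin ^ 2 / A2 ≤ 1 := by rw [div_le_one hA2pos, hA2]; nlinarith
    rw [hqdef]; linarith
  have hq1 : q < 1 := by linarith
  have hxu : x ≤ q := by
    rw [hxdef, hqdef]
    have h1 : rmin ^ 2 / A2 ≤ r ^ 2 / A2 := by gcongr
    linarith
  have hxl : -q ≤ x := by
    have hs : rmin ^ 2 / A2 + r ^ 2 / A2 = (rmin ^ 2 + r ^ 2) / A2 := by rw [← add_div]
    have h1 : (rmin ^ 2 + r ^ 2) / A2 ≤ 2 := by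
      rw [div_le_iff₀ hA2pos, hA2]; nlinarith
    rw [hxdef, hqdef]; rw [← hs] at h1; linarith
  -- positivity of 1 - x and relation to r
  have h1x : (1:ℝ) - x = r ^ 2 / A2 := by rw [hxdef]; ring
  have h1xpos : 0 < 1 - x := by rw [h1x]; positivity
  have hsA : (0:ℝ) < Real.sqrt A2 := Real.sqrt_pos.mpr hA2pos
  have hphix : (r ^ 3)⁻¹ = (Real.sqrt A2)⁻¹ ^ 3 * (1 - x) ^ (-(3:ℝ)/2) := by
    rw [rpow_neg_three_half h1xpos, h1x]
    have h2 : r ^ 2 / A2 = (r / Real.sqrt A2) ^ 2 := by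
      rw [div_pow, Real.sq_sqrt hA2pos.le]
    rw [h2, Real.sqrt_sq (by positivity)]
    field_simp
  -- RHS nonnegativity pieces
  have hRHS0 : (0:ℝ) ≤ 2 ^ ((3 : ℝ) / 2) * (rmax ^ 3)⁻¹ * binCoef (d + 1) *
      (((rmax / rmin) ^ 2 + 1) / 2) ^ ((d : ℝ) + 5 / 2) *
      Real.exp (-2 * (d + 1) / ((rmax / rmin) ^ 2 + 1)) := by
    have := (binCoef_pos (d+1)).le
    positivity
  by_cases hx0 : x = 0
  · have hsum : (∑ n ∈ Finset.range (d + 1), binCoef n * x ^ n) = 1 := by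
      rw [hx0, Finset.sum_eq_single_of_mem 0 (Finset.mem_range.mpr (Nat.succ_pos d))
        (fun b _ hb => by simp [zero_pow hb])]
      norm_num [binCoef, Nat.factorial]
    have hr2A : r ^ 2 = A2 := by
      have : r ^ 2 / A2 = 1 := by
        have := h1x; rw [hx0] at this; linarith
      field_simp at this; linarith
    have ha : Real.sqrt A2 = r := by rw [← hr2A]; exact Real.sqrt_sq hrpos.le
    rw [hsum, ha, mul_one, inv_pow, sub_self, abs_zero]
    exact hRHS0
  · -- main case
    set y : ℝ := |x| with hydef
    have hy : 0 < y := abs_pos.mpr hx0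
    have hyq : y ≤ q := abs_le.mpr ⟨hxl, hxu⟩
    set e : ℝ := if 0 < x then 1 else -1 with hedef
    have he : e = 1 ∨ e = -1 := by
      by_cases h : 0 < x <;> simp [hedef, h]
    have hey : e * y = x := by
      by_cases h : 0 < x
      · simp [hedef, h, hydef, abs_of_pos h]
      · have hneg : x < 0 := lt_of_le_of_ne (not_lt.mp h) hx0
        simp [hedef, h, hydef, abs_of_neg hneg]
    have hest := taylor_est e y q he hy hyq hq1 d
    rw [hey] at hest
    -- rewrite LHS
    rw [hphix, ← mul_sub, abs_mul,
      abs_of_nonneg (by positivity : (0:ℝ) ≤ (Real.sqrt A2)⁻¹ ^ 3)]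
    -- key comparison facts
    have hB : ((rmax / rmin) ^ 2 + 1) / 2 = (1 - q)⁻¹ := by
      rw [h1qeq, hA2]
      field_simp
      ring
    have hBpow : (((rmax / rmin) ^ 2 + 1) / 2) ^ ((d : ℝ) + 5 / 2)
        = (1 - q) ^ (-(3:ℝ)/2 - ((d:ℝ) + 1)) := by
      rw [hB, Real.inv_rpow h1q.le, ← Real.rpow_neg h1q.le]
      congr 1
      ring
    have hqexp : q ^ (d + 1) ≤ Real.exp (-2 * ((d:ℝ) + 1) / ((rmax / rmin) ^ 2 + 1)) := by
      have h1 : q ≤ Real.exp (-(1 - q)) := by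
        have := Real.add_one_le_exp (-(1 - q)); linarith
      have h2 : q ^ (d+1) ≤ (Real.exp (-(1 - q))) ^ (d+1) := pow_le_pow_left₀ hq0 h1 _
      have h3 : (Real.exp (-(1 - q))) ^ (d+1) = Real.exp (((d:ℝ)+1) * (-(1 - q))) := by
        rw [← Real.exp_nat_mul]
        push_cast
        ring_nf
      have h4 : ((d:ℝ)+1) * (-(1 - q)) = -2 * ((d:ℝ) + 1) / ((rmax / rmin) ^ 2 + 1) := by
        rw [h1qeq, hA2]
        have hd2 : (0:ℝ) < rmax ^ 2 + rmin ^ 2 := by positivity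
        field_simp
        ring
      rw [h3, h4] at h2
      exact h2
    have hAle : (Real.sqrt A2)⁻¹ ^ 3 ≤ 2 ^ ((3:ℝ)/2) * (rmax ^ 3)⁻¹ := by
      have h23 : (2:ℝ) ^ ((3:ℝ)/2) = (Real.sqrt 2) ^ 3 := by
        rw [Real.sqrt_eq_rpow, ← Real.rpow_natCast ((2:ℝ) ^ ((1:ℝ)/2)) 3,
          ← Real.rpow_mul (by norm_num : (0:ℝ) ≤ 2)]
        norm_num
      have hkey : rmax ≤ Real.sqrt 2 * Real.sqrt A2 := by
        rw [← Real.sqrt_mul (by norm_num) A2]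
        have h5 : rmax = Real.sqrt (rmax ^ 2) := (Real.sqrt_sq hrmaxpos.le).symm
        rw [h5]
        apply Real.sqrt_le_sqrt
        rw [hA2]; nlinarith
      have h6 : (Real.sqrt A2)⁻¹ ≤ Real.sqrt 2 / rmax := by
        rw [inv_eq_one_div, div_le_div_iff₀ hsA hrmaxpos]
        nlinarith [Real.sqrt_nonneg (2:ℝ), Real.sqrt_nonneg A2]
      calc (Real.sqrt A2)⁻¹ ^ 3 ≤ (Real.sqrt 2 / rmax) ^ 3 := by
            apply pow_le_pow_left₀ (by positivity) h6
        _ = 2 ^ ((3:ℝ)/2) * (rmax ^ 3)⁻¹ := by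
            rw [h23, div_pow]
            field_simp
    calc (Real.sqrt A2)⁻¹ ^ 3 * |(∑ n ∈ Finset.range (d + 1), binCoef n * x ^ n) -
            (1 - x) ^ (-(3:ℝ)/2)|
        ≤ (Real.sqrt A2)⁻¹ ^ 3 *
            (binCoef (d + 1) * q ^ (d + 1) * (1 - q) ^ (-(3:ℝ)/2 - ((d:ℝ) + 1))) := by
          apply mul_le_mul_of_nonneg_left hest (by positivity)
      _ ≤ (2 ^ ((3:ℝ)/2) * (rmax ^ 3)⁻¹) *
            (binCoef (d + 1) * (Real.exp (-2 * ((d:ℝ) + 1) / ((rmax / rmin) ^ 2 + 1))) *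
              (1 - q) ^ (-(3:ℝ)/2 - ((d:ℝ) + 1))) := by
          apply mul_le_mul hAle _ _ (by positivity)
          · apply mul_le_mul_of_nonneg_right _ (Real.rpow_nonneg h1q.le _)
            exact mul_le_mul_of_nonneg_left hqexp (binCoef_pos _).le
          · have := (binCoef_pos (d+1)).le
            have := Real.rpow_nonneg h1q.le (-(3:ℝ)/2 - ((d:ℝ) + 1))
            positivity
      _ = 2 ^ ((3 : ℝ) / 2) * (rmax ^ 3)⁻¹ * binCoef (d + 1) *
            (((rmax / rmin) ^ 2 + 1) / 2) ^ ((d : ℝ) + 5 / 2) *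
            Real.exp (-2 * (d + 1) / ((rmax / rmin) ^ 2 + 1)) := by
          rw [hBpow]; push_cast; ring
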